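/- Let (X,P_X) be a preordered group in which every element is positive or negative (for every x ∈ X, x ∈ P_X or -x ∈ P_X), and let Aut(X) be the group of group automorphisms α of X with α and α⁻¹ monotone. Define P⁺ = {α ∈ Aut(X) : α(x) ≥ x for all x ∈ P_X} and P⁻ = {α ∈ Aut(X) : α(x) ≥ x for all x with -x ∈ P_X}. Then P⁺ and P⁻ are positive cones on Aut(X) (submonoids closed under conjugation), both are admissible (if α and α⁻¹ both belong to the cone, then α(x) ~ x for all x ∈ X), and α ∈ P⁺ if and only if α⁻¹ ∈ P⁻. -/

import Mathlib

namespace PreordGrp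

/-- A positive cone on an additive group: a submonoid closed under conjugation.
It induces the preorder `x ≤ y ↔ -x + y ∈ P`. -/
def IsCone {G : Type*} [AddGroup G] (P : Set G) : Prop :=
  (0 : G) ∈ P ∧ (∀ x ∈ P, ∀ y ∈ P, x + y ∈ P) ∧ ∀ x ∈ P, ∀ a : G, a + x - a ∈ P

/-- `x ≤ y` in the preorder induced by the cone `P`. -/
def coneLe {G : Type*} [AddGroup G] (P : Set G) (x y : G) : Prop := -x + y ∈ P

/-- `x ~ y` : both `x ≤ y` and `y ≤ x` in the preorder induced by `P`. -/
def coneSim {G : Type*} [AddGroup G] (P : Set G) (x y : G) : Prop :=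
  coneLe P x y ∧ coneLe P y x

section Aut

variable {X : Type*} [AddGroup X]

/-- The group `Aut(X)` of monotone group automorphisms with monotone inverse,
as a subset of the additive automorphisms of `X`. -/
def AutMono (PX : Set X) : Set (X ≃+ X) :=
  {α | (∀ x ∈ PX, α x ∈ PX) ∧ ∀ x ∈ PX, α.symm x ∈ PX}

/-- A positive cone on `Aut(X)`: a submonoid (under composition) of `Aut(X)`
closed under conjugation by elements of `Aut(X)`. -/
def IsAutCone (PX : Set X) (P : Set (X ≃+ X)) : Prop :=
  P ⊆ AutMono PX ∧ AddEquiv.refl X ∈ P ∧ (∀ α ∈ P, ∀ β ∈ P, β.trans α ∈ P) ∧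
    ∀ α ∈ P, ∀ β ∈ AutMono PX, β.symm.trans (α.trans β) ∈ P

/-- An admissible cone on `Aut(X)`: `α ∈ P` and `α⁻¹ ∈ P` imply `α x ~ x` for all `x`. -/
def IsAdmissible (PX : Set X) (P : Set (X ≃+ X)) : Prop :=
  ∀ α ∈ P, α.symm ∈ P → ∀ x : X, coneSim PX (α x) x

/-- Addition in `X ⋊ Aut(X)` (evaluation action): `(x, α) + (x', α') = (x + α x', α ∘ α')`. -/
def aAdd (p q : X × (X ≃+ X)) : X × (X ≃+ X) := (p.1 + p.2 q.1, q.2.trans p.2)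

/-- Negation in `X ⋊ Aut(X)`. -/
def aNeg (p : X × (X ≃+ X)) : X × (X ≃+ X) := (-(p.2.symm p.1), p.2.symm)

/-- A positive cone on `X ⋊ Aut(X)`: contained in `X × Aut(X)`, contains the zero,
closed under addition and under conjugation by elements of `X ⋊ Aut(X)`. -/
def IsAutSCone (PX : Set X) (P : Set (X × (X ≃+ X))) : Prop :=
  (∀ p ∈ P, p.2 ∈ AutMono PX) ∧ ((0 : X), AddEquiv.refl X) ∈ P ∧
    (∀ p ∈ P, ∀ q ∈ P, aAdd p q ∈ P) ∧
    ∀ p ∈ P, ∀ g : X × (X ≃+ X), g.2 ∈ AutMono PX → aAdd (aAdd g p) (aNeg g) ∈ P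

/-- A compatible positive cone on `X ⋊ Aut(X)` relative to a cone `PA` on `Aut(X)`. -/
def IsAutCompatible (PX : Set X) (PA : Set (X ≃+ X)) (P : Set (X × (X ≃+ X))) : Prop :=
  IsAutSCone PX P ∧ (∀ (x : X) (α : X ≃+ X), (x, α) ∈ P → α ∈ PA) ∧
    (∀ x : X, (x, AddEquiv.refl X) ∈ P ↔ x ∈ PX) ∧ ∀ α ∈ PA, ((0 : X), α) ∈ P

/-- The lexicographic cone on `X ⋊ Aut(X)` relative to `PX` and a cone `PA` on `Aut(X)`. -/
def lexAutCone (PX : Set X) (PA : Set (X ≃+ X)) : Set (X × (X ≃+ X)) :=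
  {p | (p.2 ∈ PA ∧ p.2.symm ∉ PA) ∨ (p.2 ∈ PA ∧ p.2.symm ∈ PA ∧ p.1 ∈ PX)}

end Aut

/-- for a preordered group `(X, PX)` in which every element is
positive or negative, the sets `P⁺ = {α | α x ≥ x for all positive x}` and
`P⁻ = {α | α x ≥ x for all negative x}` are positive cones on `Aut(X)`, both
admissible, and `α ∈ P⁺ ↔ α⁻¹ ∈ P⁻`. -/
theorem stmt16 {X : Type*} [AddGroup X] (PX : Set X) (hPX : IsCone PX)
    (htot : ∀ x : X, x ∈ PX ∨ -x ∈ PX)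
    (Pp Pm : Set (X ≃+ X))
    (hPp : Pp = {α | α ∈ AutMono PX ∧ ∀ x ∈ PX, coneLe PX x (α x)})
    (hPm : Pm = {α | α ∈ AutMono PX ∧ ∀ x : X, -x ∈ PX → coneLe PX x (α x)}) :
    IsAutCone PX Pp ∧ IsAutCone PX Pm ∧
    IsAdmissible PX Pp ∧ IsAdmissible PX Pm ∧
    ∀ α ∈ AutMono PX, (α ∈ Pp ↔ α.symm ∈ Pm) := by
  obtain ⟨hz, hadd, hconj⟩ := hPX
  have hconj' : ∀ x ∈ PX, ∀ a : X, a + x + -a ∈ PX := fun x hx a => by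
    simpa [sub_eq_add_neg] using hconj x hx a
  subst hPp hPm
  refine ⟨⟨fun α hα => hα.1, ?_, ?_, ?_⟩, ⟨fun α hα => hα.1, ?_, ?_, ?_⟩, ?_, ?_, ?_⟩
  -- Pp contains identity
  · refine ⟨⟨fun x hx => hx, fun x hx => hx⟩, fun x hx => ?_⟩
    show -x + (AddEquiv.refl X) x ∈ PX
    simpa using hz
  -- Pp closed under composition
  · rintro α ⟨hαm, hα⟩ β ⟨hβm, hβ⟩
    refine ⟨⟨fun x hx => hαm.1 _ (hβm.1 x hx), fun x hx => hβm.2 _ (hαm.2 x hx)⟩, ?_⟩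
    intro x hx
    show -x + α (β x) ∈ PX
    have h1 : -x + β x ∈ PX := hβ x hx
    have h2 : -(β x) + α (β x) ∈ PX := hα (β x) (hβm.1 x hx)
    simpa [add_assoc] using hadd _ h1 _ h2
  -- Pp closed under conjugation
  · rintro α ⟨hαm, hα⟩ β hβm
    refine ⟨⟨fun x hx => hβm.1 _ (hαm.1 _ (hβm.2 x hx)),
      fun x hx => hβm.1 _ (hαm.2 _ (hβm.2 x hx))⟩, ?_⟩
    intro x hx
    show -x + β (α (β.symm x)) ∈ PX
    have h1 : -(β.symm x) + α (β.symm x) ∈ PX := hα _ (hβm.2 x hx)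
    simpa [map_add, map_neg] using hβm.1 _ h1
  -- Pm contains identity
  · refine ⟨⟨fun x hx => hx, fun x hx => hx⟩, fun x _ => ?_⟩
    show -x + (AddEquiv.refl X) x ∈ PX
    simpa using hz
  -- Pm closed under composition
  · rintro α ⟨hαm, hα⟩ β ⟨hβm, hβ⟩
    refine ⟨⟨fun x hx => hαm.1 _ (hβm.1 x hx), fun x hx => hβm.2 _ (hαm.2 x hx)⟩, ?_⟩
    intro x hx
    show -x + α (β x) ∈ PX
    have h1 : -x + β x ∈ PX := hβ x hx
    have hβx : -(β x) ∈ PX := by simpa [map_neg] using hβm.1 _ hx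
    have h2 : -(β x) + α (β x) ∈ PX := hα (β x) hβx
    simpa [add_assoc] using hadd _ h1 _ h2
  -- Pm closed under conjugation
  · rintro α ⟨hαm, hα⟩ β hβm
    refine ⟨⟨fun x hx => hβm.1 _ (hαm.1 _ (hβm.2 x hx)),
      fun x hx => hβm.1 _ (hαm.2 _ (hβm.2 x hx))⟩, ?_⟩
    intro x hx
    show -x + β (α (β.symm x)) ∈ PX
    have hy : -(β.symm x) ∈ PX := by simpa [map_neg] using hβm.2 _ hx
    have h1 : -(β.symm x) + α (β.symm x) ∈ PX := hα _ hy
    simpa [map_add, map_neg] using hβm.1 _ h1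
  -- Pp admissible
  · rintro α ⟨hαm, hα⟩ ⟨hαsm, hαi⟩ x
    rcases htot x with hx | hx
    · constructor
      · show -(α x) + x ∈ PX
        simpa [coneLe] using hαi (α x) (hαm.1 x hx)
      · exact hα x hx
    · constructor
      · have h1 : -(-x) + α (-x) ∈ PX := hα (-x) hx
        have h2 : x + -(α x) ∈ PX := by simpa [map_neg] using h1
        show -(α x) + x ∈ PX
        simpa [add_assoc] using hconj' _ h2 (-x)
      · have h1 : -(-x) + α.symm (-x) ∈ PX := hαi (-x) hx
        have h3 : α x + -x ∈ PX := by simpa [map_add, map_neg] using hαm.1 _ h1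
        show -x + α x ∈ PX
        simpa [add_assoc] using hconj' _ h3 (-(α x))
  -- Pm admissible
  · rintro α ⟨hαm, hα⟩ ⟨hαsm, hαi⟩ x
    rcases htot x with hx | hx
    · constructor
      · have h1 : -(-x) + α (-x) ∈ PX := hα (-x) (by simpa using hx)
        have h2 : x + -(α x) ∈ PX := by simpa [map_neg] using h1
        show -(α x) + x ∈ PX
        simpa [add_assoc] using hconj' _ h2 (-x)
      · have h1 : -(-x) + α.symm (-x) ∈ PX := hαi (-x) (by simpa using hx)
        have h3 : α x + -x ∈ PX := by simpa [map_add, map_neg] using hαm.1 _ h1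
        show -x + α x ∈ PX
        simpa [add_assoc] using hconj' _ h3 (-(α x))
    · constructor
      · show -(α x) + x ∈ PX
        have hy : -(α x) ∈ PX := by simpa [map_neg] using hαm.1 _ hx
        simpa [coneLe] using hαi (α x) hy
      · exact hα x hx
  -- duality
  · intro α hαm
    constructor
    · rintro ⟨_, hα⟩
      refine ⟨⟨hαm.2, fun x hx => ?_⟩, fun x hx => ?_⟩
      · show α x ∈ PX
        exact hαm.1 x hx
      · have hy : -(α.symm x) ∈ PX := by simpa [map_neg] using hαm.2 (-x) hx
        have h1 : -(-(α.symm x)) + α (-(α.symm x)) ∈ PX := hα _ hy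
        have h2 : α.symm x + -x ∈ PX := by simpa [map_neg] using h1
        show -x + α.symm x ∈ PX
        simpa [add_assoc] using hconj' _ h2 (-(α.symm x))
    · rintro ⟨_, hα⟩
      refine ⟨hαm, fun x hx => ?_⟩
      have h1 : -(-x) + α.symm (-x) ∈ PX := hα (-x) (by simpa using hx)
      have h3 : α x + -x ∈ PX := by simpa [map_add, map_neg] using hαm.1 _ h1
      show -x + α x ∈ PX
      simpa [add_assoc] using hconj' _ h3 (-(α x))

end PreordGrp
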